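/- For all real r > a > 0, D₁ > 0 and T_b > 0, the integral ∫₀^{T_b} (a/√(4·π·D₁·τ³))·(1 − a/r)·exp(−(r−a)²/(4·D₁·τ)) dτ equals (a/r)·erfc( (r−a)/(2·√(D₁·T_b)) ), where erfc is the complementary error function. -/

import Mathlib

set_option maxHeartbeats 1000000


open MeasureTheory Real Filter Set Topology

/-- The Gauss error function. -/
noncomputable def erf (x : ℝ) : ℝ :=
  (2 / Real.sqrt π) * ∫ u in (0:ℝ)..x, Real.exp (-u ^ 2)

/-- The complementary error function. -/
noncomputable def erfc (x : ℝ) : ℝ := 1 - erf x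

lemma hasDerivAt_erf (x : ℝ) :
    HasDerivAt erf (2 / Real.sqrt π * Real.exp (-x ^ 2)) x := by
  have hc : Continuous fun u : ℝ => Real.exp (-u ^ 2) := by continuity
  have h := (hc.integral_hasStrictDerivAt 0 x).hasDerivAt
  exact h.const_mul (2 / Real.sqrt π)

lemma tendsto_erf_atTop : Tendsto erf atTop (𝓝 1) := by
  have hi : IntegrableOn (fun u : ℝ => Real.exp (-u ^ 2)) (Ioi 0) := by
    simpa using (integrable_exp_neg_mul_sq one_pos).integrableOn (s := Ioi 0)
  have ht := intervalIntegral_tendsto_integral_Ioi 0 hi tendsto_id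
  have hval : ∫ u in Ioi (0:ℝ), Real.exp (-u ^ 2) = Real.sqrt π / 2 := by
    simpa using integral_gaussian_Ioi 1
  rw [hval] at ht
  have h2 := ht.const_mul (2 / Real.sqrt π)
  have hπ : Real.sqrt π ≠ 0 := ne_of_gt (Real.sqrt_pos.mpr Real.pi_pos)
  have : 2 / Real.sqrt π * (Real.sqrt π / 2) = 1 := by field_simp
  rw [this] at h2
  exact h2

lemma tendsto_erfc_atTop : Tendsto erfc atTop (𝓝 0) := by
  have := tendsto_const_nhds (α := ℝ) (x := (1:ℝ)) (f := atTop) |>.sub tendsto_erf_atTop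
  show Tendsto (fun x => 1 - erf x) atTop (𝓝 0)
  simpa using this

/-- The integral of the channel impulse response over a bit interval equals the
absorption probability. -/
theorem integral_CIR_eq_absorption_prob (a D₁ Tb r : ℝ) (ha : 0 < a) (har : a < r)
    (hD₁ : 0 < D₁) (hTb : 0 < Tb) :
    (∫ τ in (0:ℝ)..Tb,
        a / Real.sqrt (4 * π * D₁ * τ ^ 3) * (1 - a / r)
          * Real.exp (-(r - a) ^ 2 / (4 * D₁ * τ)))
      = a / r * erfc ((r - a) / (2 * Real.sqrt (D₁ * Tb))) := by
  have hr : 0 < r := ha.trans har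
  have hcpos : 0 < r - a := sub_pos.mpr har
  set c : ℝ := r - a with hc
  set g : ℝ → ℝ := fun τ =>
    a / Real.sqrt (4 * π * D₁ * τ ^ 3) * (1 - a / r)
      * Real.exp (-c ^ 2 / (4 * D₁ * τ)) with hg
  set F : ℝ → ℝ := fun τ =>
    if τ ≤ 0 then 0 else a / r * erfc (c / (2 * Real.sqrt (D₁ * τ))) with hF
  -- derivative of F at each positive point
  have hF' : ∀ τ ∈ Ioi (0:ℝ), HasDerivAt F (g τ) τ := by
    intro τ hτ
    rw [mem_Ioi] at hτ
    have hDτ : 0 < D₁ * τ := mul_pos hD₁ hτ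
    have hs : 0 < Real.sqrt (D₁ * τ) := Real.sqrt_pos.mpr hDτ
    have h1 : HasDerivAt (fun t : ℝ => D₁ * t) D₁ τ := by
      simpa using (hasDerivAt_id τ).const_mul D₁
    have h2 : HasDerivAt (fun t : ℝ => 2 * Real.sqrt (D₁ * t))
        (2 * (1 / (2 * Real.sqrt (D₁ * τ)) * D₁)) τ :=
      ((Real.hasDerivAt_sqrt hDτ.ne').comp τ h1).const_mul 2
    have hu : HasDerivAt (fun t : ℝ => c / (2 * Real.sqrt (D₁ * t)))
        ((0 * (2 * Real.sqrt (D₁ * τ)) - c * (2 * (1 / (2 * Real.sqrt (D₁ * τ)) * D₁)))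
          / (2 * Real.sqrt (D₁ * τ)) ^ 2) τ :=
      (hasDerivAt_const τ c).div h2 (by positivity)
    have herfc : HasDerivAt erfc
        (-(2 / Real.sqrt π * Real.exp (-(c / (2 * Real.sqrt (D₁ * τ))) ^ 2)))
        (c / (2 * Real.sqrt (D₁ * τ))) := by
      show HasDerivAt (fun x => 1 - erf x) _ _
      simpa using (hasDerivAt_erf (c / (2 * Real.sqrt (D₁ * τ)))).const_sub 1
    have hcomp := (herfc.comp τ hu).const_mul (a / r)
    have heq : F =ᶠ[𝓝 τ]
        fun t => a / r * erfc (c / (2 * Real.sqrt (D₁ * t))) := by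
      filter_upwards [isOpen_Ioi.mem_nhds hτ] with t ht
      simp [hF, not_le.mpr (mem_Ioi.mp ht)]
    have hder := (hcomp.congr_of_eventuallyEq heq)
    refine hder.congr_deriv ?_
    symm
    -- value equality
    have hsq : Real.sqrt (D₁ * τ) ^ 2 = D₁ * τ := Real.sq_sqrt hDτ.le
    set s : ℝ := Real.sqrt (D₁ * τ) with hsdef
    have hexp : -c ^ 2 / (4 * D₁ * τ) = -(c / (2 * s)) ^ 2 := by
      rw [div_pow, mul_pow, hsq]
      ring
    have h4 : Real.sqrt (4 * π * D₁ * τ ^ 3) = 2 * Real.sqrt π * s * τ := by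
      rw [show 4 * π * D₁ * τ ^ 3 = (2 * Real.sqrt π * s * τ) ^ 2 by
        rw [mul_pow, mul_pow, mul_pow, Real.sq_sqrt Real.pi_pos.le, hsq]; ring]
      exact Real.sqrt_sq (by positivity)
    have hD : D₁ = s ^ 2 / τ := by
      rw [hsq]; field_simp
    have hπ : (0:ℝ) < Real.sqrt π := Real.sqrt_pos.mpr Real.pi_pos
    simp only [hg, hexp, h4]
    rw [hD]
    field_simp
    ring
  -- nonnegativity of g
  have hgpos : ∀ τ ∈ Ioi (0:ℝ), 0 ≤ g τ := by
    intro τ _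
    have h1 : (0:ℝ) ≤ a / Real.sqrt (4 * π * D₁ * τ ^ 3) := by positivity
    have h2 : (0:ℝ) ≤ 1 - a / r := by
      rw [sub_nonneg]
      exact (div_le_one hr).mpr har.le
    exact mul_nonneg (mul_nonneg h1 h2) (Real.exp_pos _).le
  -- continuity of F on [0, Tb]
  have hFcont : ContinuousOn F (Icc 0 Tb) := by
    intro x hx
    rcases eq_or_lt_of_le hx.1 with h0 | h0
    · -- x = 0
      subst h0
      have hU : Tendsto (fun τ : ℝ => c / (2 * Real.sqrt (D₁ * τ))) (𝓝[>] 0) atTop := by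
        have hcont : Continuous fun τ : ℝ => 2 * Real.sqrt (D₁ * τ) :=
          continuous_const.mul (Real.continuous_sqrt.comp (continuous_const.mul continuous_id))
        have h1 : Tendsto (fun τ : ℝ => 2 * Real.sqrt (D₁ * τ)) (𝓝[>] 0) (𝓝[>] 0) := by
          apply tendsto_nhdsWithin_of_tendsto_nhds_of_eventually_within
          · have := hcont.tendsto 0
            simpa using this.mono_left nhdsWithin_le_nhds
          · filter_upwards [self_mem_nhdsWithin] with τ hτ
            have : 0 < D₁ * τ := mul_pos hD₁ (mem_Ioi.mp hτ)
            have := Real.sqrt_pos.mpr this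
            exact mem_Ioi.mpr (by positivity)
        have hdiv : Tendsto (fun x : ℝ => c / x) (𝓝[>] 0) atTop := by
          have := tendsto_inv_nhdsGT_zero.const_mul_atTop hcpos
          simpa [div_eq_mul_inv] using this
        exact hdiv.comp h1
      have hlim : Tendsto F (𝓝[>] (0:ℝ)) (𝓝 0) := by
        have h2 : Tendsto (fun τ : ℝ => a / r * erfc (c / (2 * Real.sqrt (D₁ * τ))))
            (𝓝[>] (0:ℝ)) (𝓝 (a / r * 0)) :=
          (tendsto_erfc_atTop.comp hU).const_mul (a / r)
        rw [mul_zero] at h2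
        apply h2.congr'
        filter_upwards [self_mem_nhdsWithin] with τ hτ
        simp [hF, not_le.mpr (mem_Ioi.mp hτ)]
      have hF0 : F 0 = 0 := if_pos le_rfl
      have h3 : ContinuousWithinAt F (Ioi 0) 0 := by
        rw [ContinuousWithinAt, hF0]; exact hlim
      have h4 : ContinuousWithinAt F (insert 0 (Ioi 0)) 0 :=
        h3.insert
      exact h4.mono (fun y hy => by
        rcases eq_or_lt_of_le hy.1 with h | h
        · exact Or.inl h.symm
        · exact Or.inr (mem_Ioi.mpr h))
    · exact ((hF' x (mem_Ioi.mpr h0)).continuousAt).continuousWithinAt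
  -- integrability
  have hint : IntervalIntegrable g volume 0 Tb := by
    rw [intervalIntegrable_iff_integrableOn_Ioc_of_le hTb.le]
    exact intervalIntegral.integrableOn_deriv_of_nonneg hFcont
      (fun x hx => hF' x (mem_Ioi.mpr hx.1)) (fun x hx => hgpos x (mem_Ioi.mpr hx.1))
  have key := intervalIntegral.integral_eq_sub_of_hasDerivAt_of_le hTb.le hFcont
    (fun x hx => hF' x (mem_Ioi.mpr hx.1)) hint
  have hFTb : F Tb = a / r * erfc (c / (2 * Real.sqrt (D₁ * Tb))) :=
    if_neg (not_le.mpr hTb)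
  have hF0 : F 0 = 0 := if_pos le_rfl
  rw [hFTb, hF0, sub_zero] at key
  exact key
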